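/- A classical propositional formula A (containing no modal operators) is contingent if and only if A is nontrifling, i.e., GL_ω does not prove □□A → □A. -/

import Mathlib

/-- Modal propositional formulas (variables are indexed by `ℕ`). -/
inductive MF : Type
  | var : ℕ → MF
  | fal : MF
  | imp : MF → MF → MF
  | box : MF → MF
deriving DecidableEq

namespace MF

def neg (A : MF) : MF := imp A fal
def top : MF := neg fal
def conj (A B : MF) : MF := neg (imp A (neg B))
def disj (A B : MF) : MF := imp (neg A) B
def biimp (A B : MF) : MF := conj (imp A B) (imp B A)
def dia (A : MF) : MF := neg (box (neg A))
def boxn : ℕ → MF → MF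
  | 0, A => A
  | n+1, A => box (boxn n A)
def dian (n : ℕ) (A : MF) : MF := neg (boxn n (neg A))

/-- Uniform substitution. -/
def subst (s : ℕ → MF) : MF → MF
  | var n => s n
  | fal => fal
  | imp A B => imp (subst s A) (subst s B)
  | box A => box (subst s A)

/-- The set of subformulas. -/
def subF : MF → Finset MF
  | var n => {var n}
  | fal => {fal}
  | imp A B => insert (imp A B) (subF A ∪ subF B)
  | box A => insert (box A) (subF A)

def isBox : MF → Bool
  | box _ => true
  | _ => false

def unbox : MF → MF
  | box A => A
  | A => A

/-- `cx A` is the number of subformulas of `A` of the form `□C`. -/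
def cx (A : MF) : ℕ := ((subF A).filter (fun B => isBox B = true)).card

/-- `Rf(A) = {□B → B : □B ∈ Sub(A)}`. -/
def RfSet (A : MF) : Finset MF :=
  ((subF A).filter (fun B => isBox B = true)).image (fun B => imp B (unbox B))

/-- Conjunction of a finite set of formulas. -/
noncomputable def conjFin (s : Finset MF) : MF := s.toList.foldr conj top

/-- `A` is an instance of a propositional tautology. -/
def TautInst (A : MF) : Prop :=
  ∀ v : MF → Bool, (∀ B C, v (imp B C) = (!(v B) || v C)) → v fal = false → v A = true

end MF

/-- Provability in the Gödel–Löb logic GL. -/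
inductive GLPrv : MF → Prop
  | taut {A} : MF.TautInst A → GLPrv A
  | k (A B : MF) : GLPrv (MF.imp (MF.box (MF.imp A B)) (MF.imp (MF.box A) (MF.box B)))
  | lob (A : MF) : GLPrv (MF.imp (MF.box (MF.imp (MF.box A) A)) (MF.box A))
  | mp {A B} : GLPrv (MF.imp A B) → GLPrv A → GLPrv B
  | nec {A} : GLPrv A → GLPrv (MF.box A)

/-- Provability in GL + Γ: axioms are GL-theorems and substitution instances of
formulas in Γ; rules are modus ponens (and substitution, built into the axiom rule). -/
inductive ExtPrv (Ax : Set MF) : MF → Prop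
  | gl {A} : GLPrv A → ExtPrv Ax A
  | ax {A} (s : ℕ → MF) : A ∈ Ax → ExtPrv Ax (A.subst s)
  | mp {A B} : ExtPrv Ax (MF.imp A B) → ExtPrv Ax A → ExtPrv Ax B

/-- GL_ω = GL + {◇ⁿ⊤ : n ∈ ω}. -/
def GLomegaPrv : MF → Prop := ExtPrv (Set.range fun n => MF.dian n MF.top)

/-- GLS = GL + {□p → p}. -/
def GLSPrv : MF → Prop := ExtPrv {MF.imp (MF.box (MF.var 0)) (MF.var 0)}

/-- F_s = □^{s+1}⊥ → □^s⊥. -/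
def Fmla (s : ℕ) : MF := MF.imp (MF.boxn (s+1) MF.fal) (MF.boxn s MF.fal)

/-- GL + {¬F_s}. -/
def GLFPrv (s : ℕ) : MF → Prop := ExtPrv {MF.neg (Fmla s)}

/-- A formula without modal operators. -/
def MF.BoxFree : MF → Prop
  | MF.var _ => True
  | MF.fal => True
  | MF.imp A B => MF.BoxFree A ∧ MF.BoxFree B
  | MF.box _ => False

/-- `A` is nontrifling iff GL_ω does not prove □□A → □A. -/
def Nontrifling (A : MF) : Prop :=
  ¬ GLomegaPrv (MF.imp (MF.box (MF.box A)) (MF.box A))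

section Aux

open Classical

/-- Kripke relation on ℕ: world 0 is root seeing everyone else;
world 1 is a dead end; worlds ≥ 2 form a decreasing chain. -/
def KR (x y : ℕ) : Prop := (x = 0 ∧ y ≠ 0) ∨ (2 ≤ y ∧ y < x)

lemma KR_trans {x y z : ℕ} (h1 : KR x y) (h2 : KR y z) : KR x z := by
  rcases h1 with ⟨hx, hy⟩ | ⟨hy2, hyx⟩ <;> rcases h2 with ⟨hy0, hz⟩ | ⟨hz2, hzy⟩
  · omega
  · exact Or.inl ⟨hx, by omega⟩
  · omega
  · exact Or.inr ⟨hz2, by omega⟩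

lemma KR_acc : ∀ n, Acc (fun a b => KR b a) n := by
  have key : ∀ n, 1 ≤ n → Acc (fun a b => KR b a) n := by
    intro n
    induction n using Nat.strong_induction_on with
    | _ n ih =>
      intro hn
      constructor
      intro u hu
      rcases hu with ⟨h0, _⟩ | ⟨h2, hlt⟩
      · omega
      · exact ih u hlt (by omega)
  intro n
  match n with
  | 0 =>
    constructor
    intro u hu
    rcases hu with ⟨_, h0⟩ | ⟨_, hlt⟩
    · exact key u (Nat.one_le_iff_ne_zero.mpr h0)
    · omega
  | (m+1) => exact key (m+1) (by omega)

/-- Truth in the Kripke model over `KR` with valuation `V`. -/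
def KSat (V : ℕ → ℕ → Bool) : MF → ℕ → Prop
  | .var k, w => V w k = true
  | .fal, _ => False
  | .imp B C, w => KSat V B w → KSat V C w
  | .box B, w => ∀ v, KR w v → KSat V B v

lemma glSound (V : ℕ → ℕ → Bool) {B : MF} (h : GLPrv B) : ∀ w, KSat V B w := by
  induction h with
  | @taut A ht =>
    intro w
    let v : MF → Bool := fun C => if KSat V C w then true else false
    have hcond : ∀ X Y, v (MF.imp X Y) = (!(v X) || v Y) := by
      intro X Y
      by_cases hX : KSat V X w <;> by_cases hY : KSat V Y w <;>
        simp [v, KSat, hX, hY]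
    have hfal : v MF.fal = false := by exact if_neg (fun h : KSat V MF.fal w => h)
    have := ht v hcond hfal
    simpa [v, ite_eq_iff] using this
  | k A B =>
    intro w
    exact fun h1 h2 u hu => h1 u hu (h2 u hu)
  | lob A =>
    intro w
    intro hbox
    have key : ∀ u, Acc (fun a b => KR b a) u → KR w u → KSat V A u := by
      intro u hacc
      induction hacc with
      | intro u _ ih =>
        intro hwu
        exact hbox u hwu (fun z hz => ih z hz (KR_trans hwu hz))
    exact fun u hu => key u (KR_acc u) hu
  | mp _ _ ih1 ih2 => exact fun w => ih1 w (ih2 w)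
  | nec _ ih => exact fun w u _ => ih u

lemma subst_boxn (s : ℕ → MF) (n : ℕ) (B : MF) :
    MF.subst s (MF.boxn n B) = MF.boxn n (MF.subst s B) := by
  induction n with
  | zero => rfl
  | succ n ih => simp [MF.boxn, MF.subst, ih]

lemma subst_dian (s : ℕ → MF) (n : ℕ) :
    MF.subst s (MF.dian n MF.top) = MF.dian n MF.top := by
  simp [MF.dian, MF.neg, MF.top, MF.subst, subst_boxn]

lemma not_sat_negtop (V : ℕ → ℕ → Bool) (w : ℕ) : ¬ KSat V (MF.neg MF.top) w := by
  intro h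
  exact h (fun x => x)

lemma chain_not_sat (V : ℕ → ℕ → Bool) :
    ∀ n, ¬ KSat V (MF.boxn n (MF.neg MF.top)) (n + 2) := by
  intro n
  induction n with
  | zero => exact not_sat_negtop V 2
  | succ n ih =>
    intro h
    exact ih (h (n + 2) (Or.inr ⟨by omega, by omega⟩))

lemma root_not_sat (V : ℕ → ℕ → Bool) (n : ℕ) :
    ¬ KSat V (MF.boxn n (MF.neg MF.top)) 0 := by
  match n with
  | 0 => exact not_sat_negtop V 0
  | (m+1) =>
    intro h
    exact chain_not_sat V m (h (m + 2) (Or.inl ⟨rfl, by omega⟩))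

lemma dia_top_sat (V : ℕ → ℕ → Bool) (n : ℕ) : KSat V (MF.dian n MF.top) 0 :=
  fun h => root_not_sat V n h

lemma omegaSound (V : ℕ → ℕ → Bool) {B : MF} (h : GLomegaPrv B) : KSat V B 0 := by
  induction h with
  | gl hg => exact glSound V hg 0
  | ax s hmem =>
    obtain ⟨n, rfl⟩ := hmem
    rw [subst_dian]
    exact dia_top_sat V n
  | mp _ _ ih1 ih2 => exact ih1 ih2

/-- Boolean evaluation of box-free formulas. -/
def evalB (f : ℕ → Bool) : MF → Bool
  | .var k => f k
  | .fal => false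
  | .imp B C => (!(evalB f B) || evalB f C)
  | .box _ => true

lemma sat_boxfree (V : ℕ → ℕ → Bool) (w : ℕ) :
    ∀ B : MF, MF.BoxFree B → (KSat V B w ↔ evalB (V w) B = true) := by
  intro B
  induction B with
  | var k => intro _; simp [KSat, evalB]
  | fal => intro _; simp [KSat, evalB]
  | imp B C ihB ihC =>
    intro ⟨hB, hC⟩
    simp only [KSat, evalB, Bool.or_eq_true, Bool.not_eq_true']
    constructor
    · intro h
      by_cases hb : KSat V B w
      · exact Or.inr ((ihC hC).mp (h hb))
      · exact Or.inl (by simpa [ihB hB] using hb)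
    · rintro (h | h) hb
      · exact absurd ((ihB hB).mp hb) (by simp [h])
      · exact (ihC hC).mpr h
  | box B _ => intro h; exact absurd h (by simp [MF.BoxFree])

lemma val_boxfree (v : MF → Bool)
    (hcond : ∀ X Y, v (MF.imp X Y) = (!(v X) || v Y)) (hfal : v MF.fal = false) :
    ∀ B : MF, MF.BoxFree B → v B = evalB (fun k => v (MF.var k)) B := by
  intro B
  induction B with
  | var k => intro _; rfl
  | fal => intro _; simp [evalB, hfal]
  | imp B C ihB ihC =>
    intro ⟨hB, hC⟩
    simp [evalB, hcond, ihB hB, ihC hC]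
  | box B _ => intro h; exact absurd h (by simp [MF.BoxFree])

lemma glImpBox {X Y : MF} (h : GLPrv (MF.imp X Y)) :
    GLPrv (MF.imp (MF.box X) (MF.box Y)) :=
  GLPrv.mp (GLPrv.k X Y) (GLPrv.nec h)

end Aux


/-- a box-free (classical propositional) formula is contingent
(neither a tautology nor unsatisfiable) iff it is nontrifling. -/
theorem contingent_iff_nontrifling (A : MF) (hA : MF.BoxFree A) :
    (¬ MF.TautInst A ∧ ¬ MF.TautInst (MF.neg A)) ↔ Nontrifling A := by
  constructor
  · rintro ⟨hA1, hA2⟩ hp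
    unfold MF.TautInst at hA1 hA2
    push_neg at hA1 hA2
    obtain ⟨v0, hc0, hf0, hv0⟩ := hA1
    obtain ⟨v1, hc1, hf1, hv1⟩ := hA2
    have hv0' : v0 A = false := by simpa using hv0
    have hv1' : v1 A = true := by
      have := hc1 A MF.fal
      rw [MF.neg] at hv1
      rw [this, hf1] at hv1
      simpa using hv1
    set V : ℕ → ℕ → Bool := fun w k => if w = 1 then v0 (MF.var k) else v1 (MF.var k) with hV
    have hsat := omegaSound V hp
    have hbb : KSat V (MF.box (MF.box A)) 0 := by
      intro p hp0 u hup
      have hp0' : p ≠ 0 := by rcases hp0 with ⟨_, h⟩ | ⟨_, h⟩ <;> omega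
      have hu2 : 2 ≤ u := by rcases hup with ⟨h, _⟩ | ⟨h, _⟩ <;> omega
      rw [sat_boxfree V u A hA]
      have : V u = fun k => v1 (MF.var k) := by
        funext k; simp [hV, show u ≠ 1 by omega]
      rw [this, ← val_boxfree v1 hc1 hf1 A hA, hv1']
    have hb : KSat V (MF.box A) 0 := hsat hbb
    have hA1sat := hb 1 (Or.inl ⟨rfl, one_ne_zero⟩)
    rw [sat_boxfree V 1 A hA] at hA1sat
    have : V 1 = fun k => v0 (MF.var k) := by funext k; simp [hV]
    rw [this, ← val_boxfree v0 hc0 hf0 A hA, hv0'] at hA1sat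
    exact absurd hA1sat (by simp)
  · intro hnt
    by_contra hcon
    rw [not_and_or, not_not, not_not] at hcon
    apply hnt
    rcases hcon with ht | ht
    · -- A is a tautology
      have h1 : GLPrv (MF.box A) := GLPrv.nec (GLPrv.taut ht)
      have t1 : MF.TautInst (MF.imp (MF.box A)
          (MF.imp (MF.box (MF.box A)) (MF.box A))) := by
        intro v hc hf
        rw [hc, hc]
        cases v (MF.box A) <;> cases v (MF.box (MF.box A)) <;> rfl
      exact ExtPrv.gl (GLPrv.mp (GLPrv.taut t1) h1)
    · -- ¬A is a tautology
      have t0 : MF.TautInst (MF.imp A (MF.neg MF.top)) := by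
        intro v hc hf
        have := ht v hc hf
        rw [MF.neg] at this
        rw [hc, hf] at this
        rw [MF.neg, MF.top, MF.neg, hc, hc, hc, hf]
        cases hvA : v A
        · rfl
        · rw [hvA] at this; simpa using this
      have h1 : GLPrv (MF.imp A (MF.neg MF.top)) := GLPrv.taut t0
      have h2 := glImpBox (glImpBox h1)
      have h4 : GLomegaPrv (MF.dian 2 MF.top) := by
        have := ExtPrv.ax (Ax := Set.range fun n => MF.dian n MF.top)
          (A := MF.dian 2 MF.top) (fun _ => MF.fal) ⟨2, rfl⟩
        rwa [subst_dian] at this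
      have t2 : MF.TautInst (MF.imp
          (MF.imp (MF.box (MF.box A)) (MF.box (MF.box (MF.neg MF.top))))
          (MF.imp (MF.imp (MF.box (MF.box (MF.neg MF.top))) MF.fal)
            (MF.imp (MF.box (MF.box A)) (MF.box A)))) := by
        intro v hc hf
        simp only [hc, hf]
        cases v (MF.box (MF.box A)) <;> cases v (MF.box (MF.box (MF.neg MF.top))) <;>
          cases v (MF.box A) <;> rfl
      have h5 : GLomegaPrv (MF.imp (MF.box (MF.box (MF.neg MF.top))) MF.fal) := by
        have : MF.dian 2 MF.top =
            MF.imp (MF.box (MF.box (MF.neg MF.top))) MF.fal := rfl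
        rwa [this] at h4
      exact ExtPrv.mp (ExtPrv.mp (ExtPrv.gl (GLPrv.taut t2)) (ExtPrv.gl h2)) h5
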